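/- For every μ > 0 there exists n₀ such that every 3-graph H on n ≥ n₀ vertices with δ₂(H) ≥ (3/4 + μ)n contains a spanning double pyramid: there are two distinct vertices x, y of H and an ordering v₁, …, v_{n−2} of the remaining n−2 vertices such that for every i (indices taken modulo n−2) both {x, v_i, v_{i+1}} and {y, v_i, v_{i+1}} are edges of H. -/

import Mathlib

open Finset List

theorem dirac_cycle {α : Type} [Fintype α] [DecidableEq α] (adj : α → α → Prop)
    [DecidableRel adj] (hsym : ∀ {a b}, adj a b → adj b a)
    (hirr : ∀ a, ¬ adj a a)
    (hcard : 3 ≤ Fintype.card α)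
    (hdeg : ∀ a, Fintype.card α ≤ 2 * (Finset.univ.filter (fun z => adj a z)).card) :
    ∃ cl : List α, cl.Nodup ∧ cl.length = Fintype.card α ∧ cl.Chain' adj ∧
      ∀ (h : cl ≠ []), adj (cl.getLast h) (cl.head h) := by
  classical
  set m := Fintype.card α with hm
  set P : ℕ → Prop := fun k => ∃ l : List α, l.Nodup ∧ l.Chain' adj ∧ l.length = k with hP
  have hlenle : ∀ l : List α, l.Nodup → l.length ≤ m := fun l hl => hl.length_le_card
  have hP1 : P 1 := by
    obtain ⟨a⟩ := Fintype.card_pos_iff.mp (by omega : 0 < Fintype.card α)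
    exact ⟨[a], List.nodup_singleton a, List.isChain_singleton a, rfl⟩
  set K := Nat.findGreatest P m with hK
  have hmax : ∀ l : List α, l.Nodup → l.Chain' adj → l.length ≤ K := by
    intro l h1 h2
    exact Nat.le_findGreatest (hlenle l h1) ⟨l, h1, h2, rfl⟩
  obtain ⟨l, hnd, hch, hlen⟩ : P K := Nat.findGreatest_spec (by omega) hP1
  have hK1 : 1 ≤ K := Nat.le_findGreatest (by omega) hP1
  set L := l.length with hL
  have hLK : L = K := hlen
  have hL1 : 1 ≤ L := by omega
  have hLm : L ≤ m := hlenle l hnd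
  have hlne : l ≠ [] := List.ne_nil_of_length_pos (by omega)
  have h0 : 0 < L := by omega
  set a := l.head hlne with ha
  set b := l.getLast hlne with hb
  have ha0 : a = l[0] := List.head_eq_getElem hlne
  have hbL : b = l[L-1] := List.getLast_eq_getElem hlne
  -- all neighbors of a are in l
  have hNa : ∀ w, adj a w → w ∈ l := by
    intro w hw
    by_contra hwl
    have hnd' : (w :: l).Nodup := List.nodup_cons.mpr ⟨hwl, hnd⟩
    have hch' : (w :: l).Chain' adj := by
      refine List.isChain_cons.mpr ⟨?_, hch⟩
      intro y hy
      rw [List.head?_eq_head hlne, Option.mem_some_iff] at hy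
      subst hy; exact hsym hw
    have := hmax _ hnd' hch'
    simp only [List.length_cons] at this
    omega
  have hNb : ∀ w, adj b w → w ∈ l := by
    intro w hw
    by_contra hwl
    have hnd' : (l ++ [w]).Nodup := by
      simp [List.nodup_append, hnd, hwl]
      intro a ha h; subst h; exact hwl ha
    have hch' : (l ++ [w]).Chain' adj := by
      refine List.isChain_append.mpr ⟨hch, List.isChain_singleton w, ?_⟩
      intro u hu v hv
      simp only [List.head?_cons, Option.mem_some_iff] at hv
      rw [List.getLast?_eq_getLast hlne, Option.mem_some_iff] at hu
      subst hu; subst hv; exact hw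
    have := hmax _ hnd' hch'
    simp only [List.length_append, List.length_cons] at this
    omega
  -- counting sets of indices
  set A := (Finset.Ico 1 L).filter (fun i => ∃ h : i < L, adj a l[i]) with hA
  set B := (Finset.Ico 1 L).filter (fun i => ∃ h : i - 1 < L, adj b l[i-1]) with hB
  have hcardA : (Finset.univ.filter (fun z => adj a z)).card ≤ A.card := by
    apply Finset.card_le_card_of_injOn (fun w => l.idxOf w)
    · intro w hw
      simp only [Finset.mem_coe, Finset.mem_filter, Finset.mem_univ, true_and] at hw
      have hwl : w ∈ l := hNa w hw
      have hidx : l.idxOf w < L := List.idxOf_lt_length_iff.mpr hwl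
      have hget : l[l.idxOf w] = w := List.getElem_idxOf hidx
      have hget? : l[l.idxOf w]? = some w := by
        rw [List.getElem?_eq_getElem hidx, hget]
      have hne0 : l.idxOf w ≠ 0 := by
        intro h0'
        rw [h0'] at hget?
        rw [List.getElem?_eq_getElem (by omega : 0 < l.length), Option.some_inj] at hget?
        rw [← ha0] at hget?
        exact hirr a (hget? ▸ hw)
      simp only [Finset.mem_coe, hA, Finset.mem_filter, Finset.mem_Ico]
      exact ⟨⟨by omega, hidx⟩, hidx, by rw [hget]; exact hw⟩
    · intro w1 h1 w2 h2 heq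
      simp only [Finset.mem_coe, Finset.mem_filter, Finset.mem_univ, true_and] at h1 h2
      have hw1 : w1 ∈ l := hNa _ h1
      have hw2 : w2 ∈ l := hNa _ h2
      rw [← List.getElem_idxOf (List.idxOf_lt_length_iff.mpr hw1),
        ← List.getElem_idxOf (List.idxOf_lt_length_iff.mpr hw2)]
      congr 1
  have hcardB : (Finset.univ.filter (fun z => adj b z)).card ≤ B.card := by
    apply Finset.card_le_card_of_injOn (fun w => l.idxOf w + 1)
    · intro w hw
      simp only [Finset.mem_coe, Finset.mem_filter, Finset.mem_univ, true_and] at hw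
      have hwl : w ∈ l := hNb w hw
      have hidx : l.idxOf w < L := List.idxOf_lt_length_iff.mpr hwl
      have hget : l[l.idxOf w] = w := List.getElem_idxOf hidx
      have hget? : l[l.idxOf w]? = some w := by
        rw [List.getElem?_eq_getElem hidx, hget]
      have hneL : l.idxOf w ≠ L - 1 := by
        intro h0'
        rw [h0'] at hget?
        rw [List.getElem?_eq_getElem (by omega : L - 1 < l.length), Option.some_inj] at hget?
        rw [← hbL] at hget?
        exact hirr b (hget? ▸ hw)
      simp only [Finset.mem_coe, hB, Finset.mem_filter, Finset.mem_Ico]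
      refine ⟨⟨by omega, by omega⟩, ?_⟩
      simp only [Nat.add_sub_cancel]
      exact ⟨hidx, by rw [hget]; exact hw⟩
    · intro w1 h1 w2 h2 heq
      simp only [Finset.mem_coe, Finset.mem_filter, Finset.mem_univ, true_and] at h1 h2
      have hw1 : w1 ∈ l := hNb _ h1
      have hw2 : w2 ∈ l := hNb _ h2
      have heq' : l.idxOf w1 + 1 = l.idxOf w2 + 1 := heq
      have : l.idxOf w1 = l.idxOf w2 := by omega
      rw [← List.getElem_idxOf (List.idxOf_lt_length_iff.mpr hw1),
        ← List.getElem_idxOf (List.idxOf_lt_length_iff.mpr hw2)]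
      congr 1
  have hAB : (A ∩ B).Nonempty := by
    rw [← Finset.card_pos]
    have hsub : A ∪ B ⊆ Finset.Ico 1 L := by
      apply Finset.union_subset <;> exact Finset.filter_subset _ _
    have h1 : (A ∪ B).card ≤ L - 1 := by
      have := Finset.card_le_card hsub
      simpa using this
    have h2 : (A ∪ B).card + (A ∩ B).card = A.card + B.card :=
      Finset.card_union_add_card_inter A B
    have h3 : m ≤ A.card + B.card := by
      have := hdeg a; have := hdeg b
      omega
    omega
  obtain ⟨i, hi⟩ := hAB
  simp only [Finset.mem_inter, hA, hB, Finset.mem_filter, Finset.mem_Ico] at hi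
  obtain ⟨⟨⟨hi1, hiL⟩, _, hadjA⟩, _, _, hadjB⟩ := hi
  -- build the cycle
  set cl := l.take i ++ (l.drop i).reverse with hc
  have hperm : cl.Perm l := by
    have : (l.take i ++ (l.drop i).reverse).Perm (l.take i ++ l.drop i) :=
      List.Perm.append_left _ (List.reverse_perm _)
    rwa [List.take_append_drop] at this
  have hcnd : cl.Nodup := hperm.nodup_iff.mpr hnd
  have hclen : cl.length = L := hperm.length_eq
  have hcne : cl ≠ [] := List.ne_nil_of_length_pos (by omega)
  have htake_ne : l.take i ≠ [] := by
    apply List.ne_nil_of_length_pos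
    rw [List.length_take]; omega
  have hdrop_ne : l.drop i ≠ [] := by
    apply List.ne_nil_of_length_pos
    rw [List.length_drop]; omega
  have htake_last : (l.take i).getLast? = some l[i-1] := by
    rw [List.getLast?_eq_getElem?, List.length_take]
    rw [List.getElem?_take]
    have : min i L - 1 < i := by omega
    rw [if_pos (by omega)]
    rw [List.getElem?_eq_getElem (by omega : min i l.length - 1 < l.length)]
    congr 2
    omega
  have hdrop_last : (l.drop i).getLast? = some l[L-1] := by
    rw [List.getLast?_eq_getElem?, List.length_drop, List.getElem?_drop]
    rw [List.getElem?_eq_getElem (by omega : i + (l.length - i - 1) < l.length)]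
    congr 2
    omega
  have hdrop_head : (l.drop i).head? = some l[i] := by
    rw [List.head?_eq_getElem?, List.getElem?_drop]
    rw [List.getElem?_eq_getElem (by omega : i + 0 < l.length)]
    congr 2
  have htake_head : (l.take i).head? = some l[0] := by
    rw [List.head?_eq_getElem?, List.getElem?_take]
    simp only [if_pos (by omega : 0 < i)]
    rw [List.getElem?_eq_getElem (by omega : 0 < l.length)]
  have hcch : cl.Chain' adj := by
    refine List.isChain_append.mpr ⟨hch.take i, ?_, ?_⟩
    · rw [List.isChain_reverse]
      exact (hch.drop i).imp (fun _ _ h => hsym h)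
    · intro u hu v hv
      rw [htake_last, Option.mem_some_iff] at hu
      rw [List.head?_reverse, hdrop_last, Option.mem_some_iff] at hv
      subst hu; subst hv
      exact hsym (hbL ▸ hadjB)
  have hchead : cl.head hcne = l[0] := by
    have : cl.head? = some l[0] := by
      rw [hc, List.head?_append, htake_head]
      rfl
    rwa [List.head?_eq_head hcne, Option.some_inj] at this
  have hclast : cl.getLast hcne = l[i] := by
    have : cl.getLast? = some l[i] := by
      rw [hc, List.getLast?_append, List.getLast?_reverse, hdrop_head]
      rfl
    rwa [List.getLast?_eq_getLast hcne, Option.some_inj] at this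
  have hcyc : adj (cl.getLast hcne) (cl.head hcne) := by
    rw [hchead, hclast]
    exact hsym (ha0 ▸ hadjA)
  -- cl is spanning
  have hspan : ∀ w : α, w ∈ cl := by
    intro w
    by_contra hwc
    have hwl : w ∉ l := fun h => hwc (hperm.mem_iff.mpr h)
    -- some vertex of cl is adjacent to w
    have hadjw : ∃ u ∈ cl, adj w u := by
      by_contra hno
      push_neg at hno
      set S := insert a (Finset.univ.filter (fun z => adj a z)) with hS
      set T := insert w (Finset.univ.filter (fun z => adj w z)) with hT
      have hScard : S.card = (Finset.univ.filter (fun z => adj a z)).card + 1 := by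
        rw [Finset.card_insert_of_notMem (by simp [hirr a])]
      have hTcard : T.card = (Finset.univ.filter (fun z => adj w z)).card + 1 := by
        rw [Finset.card_insert_of_notMem (by simp [hirr w])]
      have hST : Disjoint S T := by
        rw [Finset.disjoint_left]
        intro z hzS hzT
        have hzl : z ∈ l := by
          simp only [hS, Finset.mem_insert, Finset.mem_filter] at hzS
          rcases hzS with rfl | ⟨_, hz⟩
          · exact List.head_mem hlne
          · exact hNa z hz
        have hzc : z ∈ cl := hperm.mem_iff.mpr hzl
        simp only [hT, Finset.mem_insert, Finset.mem_filter] at hzT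
        rcases hzT with rfl | ⟨_, hz⟩
        · exact hwc hzc
        · exact hno z hzc (hsym (hsym hz))
      have := Finset.card_union_of_disjoint hST
      have huniv : (Finset.univ : Finset α).card = m := Finset.card_univ
      have hle : (S ∪ T).card ≤ (Finset.univ : Finset α).card := Finset.card_le_univ _
      have := hdeg a; have := hdeg w
      omega
    obtain ⟨u, huc, hwu⟩ := hadjw
    have hjL0 : List.idxOf u cl < cl.length := List.idxOf_lt_length_iff.mpr huc
    set j := List.idxOf u cl with hj
    have hjL : j < cl.length := hjL0
    have hgetj? : cl[j]? = some u := List.getElem?_idxOf huc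
    set d := w :: (cl.drop j ++ cl.take j) with hd
    have hcperm : (cl.drop j ++ cl.take j).Perm cl := by
      have := List.perm_append_comm (l₁ := cl.drop j) (l₂ := cl.take j)
      rwa [List.take_append_drop] at this
    have hdnd : d.Nodup := by
      rw [hd, List.nodup_cons]
      exact ⟨fun h => hwc (hcperm.mem_iff.mp h), hcperm.nodup_iff.mpr hcnd⟩
    have hdropj_ne : cl.drop j ≠ [] := by
      apply List.ne_nil_of_length_pos
      rw [List.length_drop]; omega
    have hdropj_head : (cl.drop j).head? = some u := by
      rw [List.head?_eq_getElem?, List.getElem?_drop, Nat.add_zero]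
      exact hgetj?
    have hdch : d.Chain' adj := by
      rw [hd]
      refine List.isChain_cons.mpr ⟨?_, ?_⟩
      · intro y hy
        rw [List.head?_append, hdropj_head] at hy
        simp only [Option.some_or, Option.mem_some_iff] at hy
        subst hy; exact hwu
      · refine List.isChain_append.mpr ⟨hcch.drop j, hcch.take j, ?_⟩
        intro p hp q hq
        have hj1 : 1 ≤ j := by
          by_contra hj0
          have : j = 0 := by omega
          rw [this] at hq
          simp at hq
        have hp' : p = cl.getLast hcne := by
          have : (cl.drop j).getLast? = cl.getLast? := by
            rw [List.getLast?_eq_getElem?, List.getLast?_eq_getElem?, List.length_drop,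
              List.getElem?_drop]
            congr 1
            omega
          rw [this, List.getLast?_eq_getLast hcne, Option.mem_some_iff] at hp
          exact hp.symm
        have hq' : q = cl.head hcne := by
          have : (cl.take j).head? = some (cl.head hcne) := by
            rw [List.head?_eq_getElem?, List.getElem?_take]
            simp only [if_pos (by omega : 0 < j)]
            rw [List.getElem?_eq_getElem (by omega : 0 < cl.length)]
            rw [List.head_eq_getElem hcne]
          rw [this, Option.mem_some_iff] at hq
          exact hq.symm
        rw [hp', hq']
        exact hcyc
    have hKd := hmax d hdnd hdch
    have hdlen : d.length = cl.length + 1 := by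
      rw [hd]
      simp only [List.length_cons, List.length_append, List.length_take, List.length_drop]
      omega
    omega
  have hcard_c : cl.length = m := by
    have : cl.toFinset = Finset.univ := Finset.eq_univ_of_forall (by
      intro z; rw [List.mem_toFinset]; exact hspan z)
    have h2 : cl.toFinset.card = cl.length := List.toFinset_card_of_nodup hcnd
    rw [this] at h2
    have h3 : (Finset.univ : Finset α).card = Fintype.card α := Finset.card_univ
    omega
  exact ⟨cl, hcnd, hcard_c, hcch, fun h => hcyc⟩


/-- for every `μ > 0` there is `n₀` such that every 3-graph on `n ≥ n₀`
vertices with minimum codegree at least `(3/4 + μ)n` contains a spanning double pyramid: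
two distinct apexes `x, y` and a cyclic ordering `v : ZMod (n-2) → V` of the remaining
vertices such that `{x, vᵢ, vᵢ₊₁}` and `{y, vᵢ, vᵢ₊₁}` are edges for all `i` (mod `n-2`). -/
theorem statement5 (μ : ℝ) (hμ : 0 < μ) :
    ∃ n₀ : ℕ, ∀ n : ℕ, n₀ ≤ n →
      ∀ (V : Type) [Fintype V] [DecidableEq V], Fintype.card V = n →
        ∀ E : Finset (Finset V), (∀ e ∈ E, e.card = 3) →
          (∀ x y : V, x ≠ y →
            (3 / 4 + μ) * n ≤ ((E.filter fun e => x ∈ e ∧ y ∈ e).card : ℝ)) →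
          ∃ x y : V, x ≠ y ∧ ∃ v : ZMod (n - 2) → V,
            Function.Injective v ∧
            (∀ i, v i ≠ x ∧ v i ≠ y) ∧
            (∀ z : V, z ≠ x → z ≠ y → ∃ i, v i = z) ∧
            (∀ i, ({x, v i, v (i + 1)} : Finset V) ∈ E ∧
                  ({y, v i, v (i + 1)} : Finset V) ∈ E) := by
  classical
  refine ⟨5, fun n hn V _ _ hcardV E hE hcodeg => ?_⟩
  -- two distinct vertices
  obtain ⟨x, y, hxy⟩ := Fintype.exists_pair_of_one_lt_card (α := V) (by omega : 1 < Fintype.card V)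
  refine ⟨x, y, hxy, ?_⟩
  -- pairs are not edges
  have hpair : ∀ p q : V, ({p, q} : Finset V) ∉ E := by
    intro p q h
    have h3 := hE _ h
    have : ({p, q} : Finset V).card ≤ 2 := by
      refine le_trans (Finset.card_insert_le _ _) ?_
      simp
    omega
  -- the common link
  set W := {z : V // z ≠ x ∧ z ≠ y} with hW
  set adj : W → W → Prop :=
    fun u w => ({x, ↑u, ↑w} : Finset V) ∈ E ∧ ({y, ↑u, ↑w} : Finset V) ∈ E with hadj
  have hWcard : Fintype.card W = n - 2 := by
    show Fintype.card {z : V // z ≠ x ∧ z ≠ y} = n - 2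
    rw [Fintype.card_subtype]
    have : Finset.univ.filter (fun z : V => z ≠ x ∧ z ≠ y) = Finset.univ \ {x, y} := by
      ext z; simp [and_comm]
    rw [this, Finset.card_sdiff_of_subset (Finset.subset_univ _), Finset.card_pair hxy,
      Finset.card_univ, hcardV]
  have hsym : ∀ {u w : W}, adj u w → adj w u := by
    intro u w h
    have he : ∀ p : V, ({p, ↑u, ↑w} : Finset V) = {p, ↑w, ↑u} := by
      intro p; ext q; simp; tauto
    exact ⟨(he x) ▸ h.1, (he y) ▸ h.2⟩
  have hirr : ∀ u : W, ¬ adj u u := by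
    intro u h
    have h1 : ({x, ↑u, ↑u} : Finset V) ∈ E := h.1
    have he : ({x, ↑u, ↑u} : Finset V) = {x, ↑u} := by
      ext w; simp
    rw [he] at h1
    exact hpair _ _ h1
  have hdeg : ∀ u : W, Fintype.card W ≤ 2 * (Finset.univ.filter (fun z => adj u z)).card := by
    intro u
    set Sx := Finset.univ.filter (fun z : V => ({x, ↑u, z} : Finset V) ∈ E) with hSx
    set Sy := Finset.univ.filter (fun z : V => ({y, ↑u, z} : Finset V) ∈ E) with hSy
    have key : ∀ (p : V), p ≠ (u : V) →
        (E.filter fun e => p ∈ e ∧ (u : V) ∈ e).card ≤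
          (Finset.univ.filter (fun z : V => ({p, ↑u, z} : Finset V) ∈ E)).card := by
      intro p hp
      set S := Finset.univ.filter (fun z : V => ({p, ↑u, z} : Finset V) ∈ E) with hS
      have hsub : (E.filter fun e => p ∈ e ∧ (u : V) ∈ e) ⊆
          S.image (fun z => ({p, ↑u, z} : Finset V)) := by
        intro e he
        simp only [Finset.mem_filter] at he
        obtain ⟨heE, hpe, hue⟩ := he
        have h3 := hE _ heE
        have hss : ({p, ↑u} : Finset V) ⊆ e := by
          intro z hz
          simp only [Finset.mem_insert, Finset.mem_singleton] at hz
          rcases hz with rfl | rfl <;> assumption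
        have hc2 : ({p, ↑u} : Finset V).card = 2 := Finset.card_pair hp
        have hdiff : (e \ {p, ↑u}).card = 1 := by
          rw [Finset.card_sdiff_of_subset hss, h3, hc2]
        obtain ⟨z, hz⟩ := Finset.card_eq_one.mp hdiff
        have hze : e = {p, ↑u, z} := by
          have := Finset.union_sdiff_of_subset hss
          rw [hz] at this
          rw [← this]
          ext w
          simp only [Finset.mem_union, Finset.mem_insert, Finset.mem_singleton]
          tauto
        refine Finset.mem_image.mpr ⟨z, ?_, hze.symm⟩
        rw [hS]
        simp only [Finset.mem_filter, Finset.mem_univ, true_and]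
        rwa [← hze]
      calc (E.filter fun e => p ∈ e ∧ (u : V) ∈ e).card
          ≤ (S.image (fun z => ({p, ↑u, z} : Finset V))).card := Finset.card_le_card hsub
        _ ≤ S.card := Finset.card_image_le
    have hxu : x ≠ (u : V) := Ne.symm u.2.1
    have hyu : y ≠ (u : V) := Ne.symm u.2.2
    have hSxc : (3 / 4 + μ) * n ≤ (Sx.card : ℝ) :=
      le_trans (hcodeg x (u : V) hxu) (by exact_mod_cast key x hxu)
    have hSyc : (3 / 4 + μ) * n ≤ (Sy.card : ℝ) :=
      le_trans (hcodeg y (u : V) hyu) (by exact_mod_cast key y hyu)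
    -- the intersection injects into the neighborhood of u
    have hint : (Sx ∩ Sy).card ≤ (Finset.univ.filter (fun z => adj u z)).card := by
      have hmem : ∀ z ∈ Sx ∩ Sy, z ≠ x ∧ z ≠ y := by
        intro z hz
        simp only [Finset.mem_inter, hSx, hSy, Finset.mem_filter, Finset.mem_univ,
          true_and] at hz
        constructor
        · rintro rfl
          have h1 := hz.1
          have he : ({z, ↑u, z} : Finset V) = {z, ↑u} := by ext w; simp; tauto
          rw [he] at h1
          exact hpair _ _ h1
        · rintro rfl
          have h1 := hz.2
          have he : ({z, ↑u, z} : Finset V) = {z, ↑u} := by ext w; simp; tauto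
          rw [he] at h1
          exact hpair _ _ h1
      apply Finset.card_le_card_of_injOn
        (fun z => if hz : z ≠ x ∧ z ≠ y then (⟨z, hz⟩ : W) else u)
      · intro z hz
        have hzxy := hmem z hz
        simp only [dif_pos hzxy]
        simp only [Finset.mem_coe, Finset.mem_inter, hSx, hSy, Finset.mem_filter, Finset.mem_univ,
          true_and] at hz
        simp only [Finset.mem_coe, Finset.mem_filter, Finset.mem_univ, true_and, hadj]
        exact hz
      · intro z1 h1 z2 h2 heq
        have hz1 := hmem z1 h1
        have hz2 := hmem z2 h2
        simp only [dif_pos hz1, dif_pos hz2] at heq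
        exact congrArg Subtype.val heq
    have hunion : ((Sx ∪ Sy).card : ℝ) ≤ n := by
      have h1 := Finset.card_le_univ (Sx ∪ Sy)
      have h2 : (Finset.univ : Finset V).card = n := by rw [Finset.card_univ, hcardV]
      exact_mod_cast hcardV ▸ h1
    have hie : (Sx ∪ Sy).card + (Sx ∩ Sy).card = Sx.card + Sy.card :=
      Finset.card_union_add_card_inter Sx Sy
    -- real arithmetic
    rw [hWcard]
    have hreal : (n : ℝ) ≤ 2 * ((Finset.univ.filter (fun z => adj u z)).card : ℝ) := by
      have hμn : 0 ≤ μ * n := mul_nonneg hμ.le (Nat.cast_nonneg n)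
      have h1 : ((Sx ∩ Sy).card : ℝ) ≤ ((Finset.univ.filter (fun z => adj u z)).card : ℝ) := by
        exact_mod_cast hint
      have h2 : ((Sx ∪ Sy).card : ℝ) + ((Sx ∩ Sy).card : ℝ) = (Sx.card : ℝ) + (Sy.card : ℝ) := by
        exact_mod_cast hie
      linarith
    have : (n : ℝ) ≤ ((2 * (Finset.univ.filter (fun z => adj u z)).card : ℕ) : ℝ) := by
      push_cast
      linarith
    have := Nat.cast_le.mp this
    omega
  -- apply Dirac
  have hcard3 : 3 ≤ Fintype.card W := by omega
  obtain ⟨cl, hnd, hlen, hch, hcyc⟩ :=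
    dirac_cycle adj (fun {a b} => hsym) hirr hcard3 hdeg
  have hlen' : cl.length = n - 2 := by rw [hlen, hWcard]
  haveI : NeZero (n - 2) := ⟨by omega⟩
  haveI : Fact (1 < n - 2) := ⟨by omega⟩
  have hval : ∀ i : ZMod (n - 2), i.val < cl.length := by
    intro i; rw [hlen']; exact ZMod.val_lt i
  set v0 : ZMod (n - 2) → W := fun i => cl.get ⟨i.val, hval i⟩ with hv0
  have hclne : cl ≠ [] := List.ne_nil_of_length_pos (by omega)
  have hall : ∀ w : W, w ∈ cl := by
    have : cl.toFinset = Finset.univ := by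
      apply Finset.eq_univ_of_card
      rw [List.toFinset_card_of_nodup hnd, hlen]
    intro w
    rw [← List.mem_toFinset, this]
    exact Finset.mem_univ w
  have hgc : ∀ (a b : ℕ) (ha : a < cl.length) (hb : b < cl.length), a = b →
      cl[a]'ha = cl[b]'hb := by
    intro a b ha hb h; subst h; rfl
  have hadjstep : ∀ i : ZMod (n - 2), adj (v0 i) (v0 (i + 1)) := by
    intro i
    have hv1 : (i + 1).val = (i.val + 1) % (n - 2) := by
      rw [ZMod.val_add, ZMod.val_one]
    by_cases hlt : i.val + 1 < n - 2
    · have hv1' : (i + 1).val = i.val + 1 := by rw [hv1, Nat.mod_eq_of_lt hlt]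
      have hstep := List.isChain_iff_getElem.mp hch i.val (by omega)
      have : (⟨(i + 1).val, hval _⟩ : Fin cl.length) = ⟨i.val + 1, by omega⟩ :=
        Fin.ext hv1'
      rw [hv0]
      simp only [this]
      exact hstep
    · have hieq : i.val = n - 3 := by have := ZMod.val_lt i; omega
      have hv1' : (i + 1).val = 0 := by
        rw [hv1, hieq]
        have : n - 3 + 1 = n - 2 := by omega
        rw [this, Nat.mod_self]
      have hlast : v0 i = cl.getLast hclne := by
        show cl.get ⟨i.val, hval i⟩ = cl.getLast hclne
        rw [List.get_eq_getElem, List.getLast_eq_getElem hclne]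
        exact hgc _ _ _ _ (by simp only [Fin.val_mk]; omega)
      have hhead : v0 (i + 1) = cl.head hclne := by
        show cl.get ⟨(i + 1).val, hval _⟩ = cl.head hclne
        rw [List.get_eq_getElem, List.head_eq_getElem hclne]
        exact hgc _ _ _ _ (by simp only [Fin.val_mk]; omega)
      rw [hlast, hhead]
      exact hcyc hclne
  refine ⟨fun i => (v0 i : V), ?_, ?_, ?_, ?_⟩
  · intro i j hij
    have h1 : v0 i = v0 j := Subtype.ext hij
    rw [hv0] at h1
    simp only [List.get_eq_getElem] at h1
    have := (hnd.getElem_inj_iff).mp h1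
    exact ZMod.val_injective _ this
  · intro i
    exact (v0 i).2
  · intro z hzx hzy
    have hzW : (⟨z, hzx, hzy⟩ : W) ∈ cl := hall _
    set k := List.idxOf (⟨z, hzx, hzy⟩ : W) cl with hk
    have hkl : k < cl.length := List.idxOf_lt_length_iff.mpr hzW
    refine ⟨(k : ZMod (n - 2)), ?_⟩
    have hkv : ((k : ZMod (n - 2))).val = k := by
      rw [ZMod.val_natCast, Nat.mod_eq_of_lt (by omega)]
    show ((v0 _ : W) : V) = z
    rw [hv0]
    simp only [List.get_eq_getElem]
    have hg : cl[k]'hkl = (⟨z, hzx, hzy⟩ : W) := List.getElem_idxOf hkl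
    have : cl[(((k : ZMod (n-2))).val)]'(hval _) = (⟨z, hzx, hzy⟩ : W) := by
      rw [← hg]
      exact hgc _ _ _ _ hkv
    rw [this]
  · intro i
    exact hadjstep i
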